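/- Let (P,w) be a normalized weighted set in R^d. Define p'_i = (p_i,1)/‖(p_i,1)‖² ∈ R^{d+1} and w'_i = w_i ‖(p_i,1)‖²/2. Then (i) ‖p'_i‖ ≤ 1 for every i, (ii) Σ_i w'_i = 1, and (iii) for any u' ∈ R^n, setting u_i = 2u'_i/‖(p_i,1)‖², one has Σ_i (w'_i − u'_i) p'_i = (1/2)·(Σ_i (w_i − u_i) p_i , Σ_i (w_i − u_i)). -/

import Mathlib

open scoped BigOperators

theorem stmt8 {d n : ℕ} (p : Fin n → EuclideanSpace ℝ (Fin d)) (w u u' : Fin n → ℝ)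
    (hw1 : ∑ i, w i = 1) (hw2 : ∑ i, w i • p i = 0) (hw3 : ∑ i, w i * ‖p i‖ ^ 2 = 1)
    (lift : Fin n → WithLp 2 (EuclideanSpace ℝ (Fin d) × ℝ))
    (hlift : ∀ i, lift i = (WithLp.equiv 2 (EuclideanSpace ℝ (Fin d) × ℝ)).symm (p i, 1))
    (p' : Fin n → WithLp 2 (EuclideanSpace ℝ (Fin d) × ℝ))
    (hp' : ∀ i, p' i = (‖lift i‖ ^ 2)⁻¹ • lift i)
    (w' : Fin n → ℝ) (hw' : ∀ i, w' i = w i * ‖lift i‖ ^ 2 / 2)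
    (hu : ∀ i, u i = 2 * u' i / ‖lift i‖ ^ 2) :
    (∀ i, ‖p' i‖ ≤ 1) ∧ (∑ i, w' i = 1) ∧
      (∑ i, (w' i - u' i) • p' i
        = (2 : ℝ)⁻¹ • (WithLp.equiv 2 (EuclideanSpace ℝ (Fin d) × ℝ)).symm
            (∑ i, (w i - u i) • p i, ∑ i, (w i - u i))) := by
  have hsq : ∀ i, ‖lift i‖ ^ 2 = ‖p i‖ ^ 2 + 1 := by
    intro i
    rw [hlift i, WithLp.prod_norm_sq_eq_of_L2]
    simp
  have hpos : ∀ i, 0 < ‖lift i‖ ^ 2 := by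
    intro i; rw [hsq i]; linarith [sq_nonneg ‖p i‖]
  refine ⟨?_, ?_, ?_⟩
  · intro i
    rw [hp' i, norm_smul, Real.norm_eq_abs, abs_inv, abs_of_nonneg (sq_nonneg _)]
    have h1 : 1 ≤ ‖lift i‖ ^ 2 := by rw [hsq i]; linarith [sq_nonneg ‖p i‖]
    have h1' : 1 ≤ ‖lift i‖ := by nlinarith [norm_nonneg (lift i)]
    rw [sq]
    rw [mul_inv, mul_assoc]
    have : ‖lift i‖⁻¹ * ‖lift i‖ = 1 := inv_mul_cancel₀ (by linarith)
    rw [this, mul_one]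
    exact inv_le_one_of_one_le₀ h1'
  · have : ∀ i, w' i = (w i * ‖p i‖ ^ 2) / 2 + w i / 2 := by
      intro i; rw [hw' i, hsq i]; ring
    simp_rw [this]
    rw [Finset.sum_add_distrib, ← Finset.sum_div, ← Finset.sum_div, hw1, hw3]
    norm_num
  · have hcoef : ∀ i, (w' i - u' i) • p' i = ((2:ℝ)⁻¹ * (w i - u i)) • lift i := by
      intro i
      rw [hp' i, hw' i, hu i, smul_smul]
      have hL : ‖lift i‖ ≠ 0 := by
        have := hpos i; intro h; rw [h] at this; simp at this
      congr 1
      field_simp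
    simp_rw [hcoef, mul_smul, ← Finset.smul_sum]
    congr 1
    have hlin : ∀ i, (w i - u i) • lift i
        = (WithLp.equiv 2 (EuclideanSpace ℝ (Fin d) × ℝ)).symm
            ((w i - u i) • p i, (w i - u i) • (1:ℝ)) := by
      intro i; rw [hlift i]; rfl
    simp_rw [hlin]
    have : ∑ i, (WithLp.equiv 2 (EuclideanSpace ℝ (Fin d) × ℝ)).symm
            ((w i - u i) • p i, (w i - u i) • (1:ℝ))
        = (WithLp.equiv 2 (EuclideanSpace ℝ (Fin d) × ℝ)).symm
            (∑ i, ((w i - u i) • p i, (w i - u i) • (1:ℝ))) :=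
          (WithLp.toLp_sum 2 _ _ _).symm
    rw [this]
    congr 1
    rw [Prod.ext_iff]
    constructor
    · simp [Prod.fst_sum]
    · simp [Prod.snd_sum]
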